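/- The group Γ_5^4 is infinite and non-commutative. -/

import Mathlib

/-- Ordered quadruples of elements of `Fin n`, used to index the generators `(ijkl)`. -/
abbrev Quad (n : ℕ) : Type := Fin n × Fin n × Fin n × Fin n

/-- The underlying set `{i, j, k, l}` of a quadruple `(i, j, k, l)`. -/
def qFinset {n : ℕ} (q : Quad n) : Finset (Fin n) := {q.1, q.2.1, q.2.2.1, q.2.2.2}

/-- The four entries of the quadruple are pairwise distinct. -/
def qDistinct {n : ℕ} (q : Quad n) : Prop := (qFinset q).card = 4

/-- The defining relators of the group `Γ_n^4` of Kim–Manturov: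
generators indexed by quadruples of distinct elements (non-distinct quadruples are killed),
involutive relations (1), commutativity relations (2), pentagon relations (3) and dihedral
relations (4). -/
def gammaRels (n : ℕ) : Set (FreeGroup (Quad n)) :=
  {w | ∃ q : Quad n, ¬ qDistinct q ∧ w = FreeGroup.of q} ∪
  {w | ∃ q : Quad n, qDistinct q ∧ w = FreeGroup.of q * FreeGroup.of q} ∪
  {w | ∃ q r : Quad n, qDistinct q ∧ qDistinct r ∧ (qFinset q ∩ qFinset r).card ≤ 2 ∧
      w = FreeGroup.of q * FreeGroup.of r * (FreeGroup.of q)⁻¹ * (FreeGroup.of r)⁻¹} ∪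
  {w | ∃ i j k l m : Fin n, ({i, j, k, l, m} : Finset (Fin n)).card = 5 ∧
      w = FreeGroup.of (i, j, k, l) * FreeGroup.of (i, j, l, m) * FreeGroup.of (j, k, l, m) *
        FreeGroup.of (i, j, k, m) * FreeGroup.of (i, k, l, m)} ∪
  {w | ∃ i j k l : Fin n, qDistinct (i, j, k, l) ∧
      (w = FreeGroup.of (i, j, k, l) * (FreeGroup.of (j, k, l, i))⁻¹ ∨
       w = FreeGroup.of (i, j, k, l) * (FreeGroup.of (l, k, j, i))⁻¹)}

/-- The group `Γ_n^4` of Kim–Manturov. -/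
abbrev Gamma (n : ℕ) : Type := PresentedGroup (gammaRels n)

/-- The generator `(ijkl)` of `Γ_n^4`. -/
def gg {n : ℕ} (q : Quad n) : Gamma n := PresentedGroup.of q
set_option maxRecDepth 100000

def Dih : Type := ℤ × Bool

instance : DecidableEq Dih := instDecidableEqProd

instance : Mul Dih := ⟨fun a b => (a.1 + (if a.2 then -b.1 else b.1), xor a.2 b.2)⟩
instance : One Dih := ⟨(0, false)⟩
instance : Inv Dih := ⟨fun a => (if a.2 then a.1 else -a.1, a.2)⟩

@[simp] lemma Dih.mul_def (a b : Dih) :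
    a * b = (a.1 + (if a.2 then -b.1 else b.1), xor a.2 b.2) := rfl
@[simp] lemma Dih.one_def : (1 : Dih) = ((0 : ℤ), false) := rfl
@[simp] lemma Dih.inv_def (a : Dih) : a⁻¹ = (if a.2 then a.1 else -a.1, a.2) := rfl

instance : Group Dih where
  mul_assoc a b c := by
    rw [Dih.mul_def (a * b) c, Dih.mul_def a (b * c), Dih.mul_def a b, Dih.mul_def b c]
    refine Prod.ext (α := ℤ) (β := Bool) ?_ ?_ <;>
    obtain ⟨x, s⟩ := a <;> obtain ⟨y, t⟩ := b <;> obtain ⟨z, u⟩ := c <;>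
    cases s <;> cases t <;> cases u <;> simp <;> ring
  one_mul a := by
    rw [Dih.mul_def, Dih.one_def]; refine Prod.ext (α := ℤ) (β := Bool) ?_ ?_ <;>
    obtain ⟨x, s⟩ := a <;> cases s <;> simp
  mul_one a := by
    rw [Dih.mul_def, Dih.one_def]; refine Prod.ext (α := ℤ) (β := Bool) ?_ ?_ <;>
    obtain ⟨x, s⟩ := a <;> cases s <;> simp
  inv_mul_cancel a := by
    rw [Dih.mul_def, Dih.inv_def, Dih.one_def]; refine Prod.ext (α := ℤ) (β := Bool) ?_ ?_ <;>
    obtain ⟨x, s⟩ := a <;> cases s <;> simp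


instance {n : ℕ} (q : Quad n) : Decidable (qDistinct q) := by
  unfold qDistinct; infer_instance

def dA : Dih := ((0 : ℤ), true)
def dB : Dih := ((1 : ℤ), true)

/-- value attached to the unordered pair {m, p} -/
def tval (m p : Fin 5) : Dih :=
  if (m = 1 ∧ p = 3) ∨ (m = 3 ∧ p = 1) ∨ (m = 2 ∧ p = 4) ∨ (m = 4 ∧ p = 2) then dA
  else if (m = 1 ∧ p = 4) ∨ (m = 4 ∧ p = 1) ∨ (m = 2 ∧ p = 3) ∨ (m = 3 ∧ p = 2) then dB
  else 1

/-- the homomorphism's value on a generator -/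
def fg (q : Quad 5) : Dih :=
  if qDistinct q then
    tval (-(q.1 + q.2.1 + q.2.2.1 + q.2.2.2))
      (if q.1 = 0 then q.2.2.1 else if q.2.1 = 0 then q.2.2.2
       else if q.2.2.1 = 0 then q.1 else q.2.1)
  else 1

lemma fg_inv : ∀ q : Quad 5, qDistinct q → fg q * fg q = 1 := by decide


lemma fg_pent : ∀ i j k l m : Fin 5, ({i, j, k, l, m} : Finset (Fin 5)).card = 5 →
    fg (i, j, k, l) * fg (i, j, l, m) * fg (j, k, l, m) *
      fg (i, j, k, m) * fg (i, k, l, m) = 1 := by decide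

lemma fg_dih : ∀ i j k l : Fin 5, qDistinct (i, j, k, l) →
    fg (i, j, k, l) = fg (j, k, l, i) ∧ fg (i, j, k, l) = fg (l, k, j, i) := by decide

lemma fg_notdist : ∀ q : Quad 5, ¬ qDistinct q → fg q = 1 := by
  intro q h; simp [fg, h]; rfl

lemma inter_big (q r : Quad 5) (hq : qDistinct q) (hr : qDistinct r) :
    3 ≤ (qFinset q ∩ qFinset r).card := by
  have h1 := Finset.card_inter_add_card_union (qFinset q) (qFinset r)
  have h2 : (qFinset q ∪ qFinset r).card ≤ 5 := by
    have := Finset.card_le_univ (qFinset q ∪ qFinset r)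
    simpa using this
  unfold qDistinct at hq hr
  omega

lemma rels_hold : ∀ r ∈ gammaRels 5, FreeGroup.lift fg r = 1 := by
  intro w hw
  rcases hw with ((((⟨q, hq, rfl⟩ | ⟨q, hq, rfl⟩) | ⟨q, r, hq, hr, hc, rfl⟩) |
      ⟨i, j, k, l, m, hc, rfl⟩) | ⟨i, j, k, l, hd, (rfl | rfl)⟩)
  · simpa using fg_notdist q hq
  · simpa using fg_inv q hq
  · exact absurd hc (by have := inter_big q r hq hr; omega)
  · simpa using fg_pent i j k l m hc
  · simp only [map_mul, map_inv, FreeGroup.lift_apply_of, (fg_dih i j k l hd).1, mul_inv_cancel]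
  · simp only [map_mul, map_inv, FreeGroup.lift_apply_of, (fg_dih i j k l hd).2, mul_inv_cancel]

def φ : Gamma 5 →* Dih := PresentedGroup.toGroup rels_hold

def qa : Quad 5 := (0, 2, 3, 4)
def qb : Quad 5 := (0, 2, 4, 3)

lemma fg_qa : fg qa = dA := by decide
lemma fg_qb : fg qb = dB := by decide

lemma phi_gg (q : Quad 5) : φ (gg q) = fg q := PresentedGroup.toGroup.of rels_hold

lemma dih_pow (n : ℕ) : (dA * dB) ^ n = ((-(n : ℤ)), false) := by
  induction n with
  | zero => rfl
  | succ k ih => rw [pow_succ, Dih.mul_def, ih]; simp only [Dih.mul_def]; norm_num [dA, dB]; ring_nf; rfl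

/-- The group `Γ_5^4` is infinite and non-commutative. -/
theorem gamma_five_infinite_noncomm :
    Infinite (Gamma 5) ∧ ∃ a b : Gamma 5, a * b ≠ b * a := by
  constructor
  · apply Infinite.of_injective (fun n : ℕ => (gg qa * gg qb) ^ n)
    intro m n h
    have h2 := congrArg φ h
    simp only [map_pow, map_mul, phi_gg, fg_qa, fg_qb, dih_pow] at h2
    have := congrArg Prod.fst h2
    simpa using this
  · refine ⟨gg qa, gg qb, fun h => ?_⟩
    have h2 := congrArg φ h
    simp only [map_mul, phi_gg, fg_qa, fg_qb] at h2
    exact absurd h2 (by decide)
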